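/- Ideal property of operators supported near a big family in the quasi-local Roe algebra: Let X be a bornological coarse space, (H,φ) an X-controlled Hilbert space, and (Y_i)_{i∈I} a big family on X. Let D ⊆ B(H) be the norm closure of the union over i ∈ I of the sets {T ∈ B(H) : φ(χ_{Y_i}) T φ(χ_{Y_i}) = T}. If Q ∈ B(H) is quasi-local and A ∈ D, then Q A ∈ D and A Q ∈ D. -/

import Mathlib

/-- The `U`-thickening `U[B] := {x : ∃ b ∈ B, (x, b) ∈ U}` of a subset `B` by an
entourage `U`. -/
def thick {X : Type*} (U : Set (X × X)) (B : Set X) : Set X :=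
  {x | ∃ b ∈ B, (x, b) ∈ U}

/-- Composition of relations: `U ∘ V`. -/
def relComp {X : Type*} (U V : Set (X × X)) : Set (X × X) :=
  {p | ∃ z, (p.1, z) ∈ U ∧ (z, p.2) ∈ V}

/-- `iterComp U n` is the `(n+1)`-fold composition `U ∘ U ∘ ⋯ ∘ U`. -/
def iterComp {X : Type*} (U : Set (X × X)) : ℕ → Set (X × X)
  | 0 => U
  | n + 1 => relComp (iterComp U n) U

/-- A bornological coarse structure on a set `X`: a coarse structure (a collection of
entourages containing the diagonal and closed under subsets, finite unions, inverses and
compositions) together with a compatible bornology (a collection of bounded sets covering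
`X` and closed under subsets and finite unions, such that controlled thickenings of bounded
sets are bounded). -/
structure BornCoarse (X : Type*) where
  /-- the entourages -/
  entourages : Set (Set (X × X))
  diag_mem : {p : X × X | p.1 = p.2} ∈ entourages
  subset_mem : ∀ ⦃U V : Set (X × X)⦄, U ∈ entourages → V ⊆ U → V ∈ entourages
  union_mem : ∀ ⦃U V : Set (X × X)⦄, U ∈ entourages → V ∈ entourages → U ∪ V ∈ entourages
  inv_mem : ∀ ⦃U : Set (X × X)⦄, U ∈ entourages → {p : X × X | (p.2, p.1) ∈ U} ∈ entourages
  comp_mem : ∀ ⦃U V : Set (X × X)⦄, U ∈ entourages → V ∈ entourages →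
    relComp U V ∈ entourages
  /-- the bounded subsets -/
  bounded : Set (Set X)
  covers : ∀ x : X, ∃ B ∈ bounded, x ∈ B
  empty_mem : (∅ : Set X) ∈ bounded
  bounded_subset : ∀ ⦃B C : Set X⦄, B ∈ bounded → C ⊆ B → C ∈ bounded
  bounded_union : ∀ ⦃B C : Set X⦄, B ∈ bounded → C ∈ bounded → B ∪ C ∈ bounded
  compat : ∀ ⦃U : Set (X × X)⦄ ⦃B : Set X⦄, U ∈ entourages → B ∈ bounded →
    thick U B ∈ bounded

/-- A map between bornological coarse spaces is controlled if it maps entourages to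
entourages. -/
def IsControlled {X X' : Type*} (S : BornCoarse X) (S' : BornCoarse X') (f : X → X') :
    Prop :=
  ∀ U ∈ S.entourages, (fun p : X × X => (f p.1, f p.2)) '' U ∈ S'.entourages

/-- A map between bornological coarse spaces is proper if preimages of bounded sets are
bounded. -/
def IsProper {X X' : Type*} (S : BornCoarse X) (S' : BornCoarse X') (f : X → X') : Prop :=
  ∀ B ∈ S'.bounded, f ⁻¹' B ∈ S.bounded

/-- A morphism of bornological coarse spaces is a controlled and proper map. -/
def IsMorphism {X X' : Type*} (S : BornCoarse X) (S' : BornCoarse X') (f : X → X') : Prop :=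
  IsControlled S S' f ∧ IsProper S S' f

noncomputable section

/-- The characteristic function of `B ⊆ X` as a bounded (continuous) function on the
discrete space `X`. -/
def chi {X : Type*} [TopologicalSpace X] [DiscreteTopology X] (B : Set X) :
    BoundedContinuousFunction X ℂ :=
  BoundedContinuousFunction.ofNormedAddCommGroup (B.indicator fun _ => (1 : ℂ))
    continuous_of_discreteTopology 1 fun x => by
      by_cases hx : x ∈ B <;> simp [Set.indicator_apply, hx]

/-- A unital `*`-homomorphism from the `C*`-algebra `C(X)` of bounded functions on the
discrete space `X` into the bounded operators on the Hilbert space `H`. -/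
abbrev CtrlRep (X : Type*) [TopologicalSpace X] [DiscreteTopology X] (H : Type*)
    [NormedAddCommGroup H] [InnerProductSpace ℂ H] [CompleteSpace H] :=
  BoundedContinuousFunction X ℂ →⋆ₐ[ℂ] (H →L[ℂ] H)

section

variable {X : Type*} [TopologicalSpace X] [DiscreteTopology X]
variable {H : Type*} [NormedAddCommGroup H] [InnerProductSpace ℂ H] [CompleteSpace H]
variable {H' : Type*} [NormedAddCommGroup H'] [InnerProductSpace ℂ H'] [CompleteSpace H']

/-- `H(B) = φ(χ_B)H`, the subspace of vectors supported on `B`. -/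
def Hsub (φ : CtrlRep X H) (B : Set X) : Set H :=
  Set.range ⇑(φ (chi B))

/-- `(H, φ)` is an `X`-controlled Hilbert space: `H(B)` is separable for every bounded
subset `B`. -/
def IsControlledHilbert (S : BornCoarse X) (φ : CtrlRep X H) : Prop :=
  ∀ B ∈ S.bounded, TopologicalSpace.IsSeparable (Hsub φ B)

/-- A bounded operator has controlled propagation if there is an entourage `U` with
`A(H(B)) ⊆ H'(U[B])` for every bounded `B`. -/
def HasCtrlProp (S : BornCoarse X) (φ : CtrlRep X H) (φ' : CtrlRep X H')
    (A : H →L[ℂ] H') : Prop :=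
  ∃ U ∈ S.entourages, ∀ B ∈ S.bounded, ⇑A '' Hsub φ B ⊆ Hsub φ' (thick U B)

/-- A bounded operator is quasi-local if there is an entourage `U` such that for every
`ε > 0` there is `n` with `‖φ'(χ_{B'}) A φ(χ_B)‖ ≤ ε` for all `Uⁿ`-separated `B, B'`. -/
def IsQuasiLocal (S : BornCoarse X) (φ : CtrlRep X H) (φ' : CtrlRep X H')
    (A : H →L[ℂ] H') : Prop :=
  ∃ U ∈ S.entourages, ∀ ε : ℝ, 0 < ε → ∃ n : ℕ, ∀ B B' : Set X,
    thick (iterComp U n) B ∩ thick (iterComp U n) B' = ∅ →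
      ‖φ' (chi B') ∘L A ∘L φ (chi B)‖ ≤ ε

/-- A bounded operator is locally compact if `φ(χ_B)A` and `Aφ(χ_B)` are compact for every
bounded `B`. -/
def IsLocallyCompactOp (S : BornCoarse X) (φ : CtrlRep X H) (A : H →L[ℂ] H) : Prop :=
  ∀ B ∈ S.bounded,
    IsCompactOperator ⇑(φ (chi B) ∘L A) ∧ IsCompactOperator ⇑(A ∘L φ (chi B))

/-- A controlled Hilbert space is locally finite if `H(B)` is finite-dimensional for every
bounded `B`. -/
def IsLocallyFiniteRep (S : BornCoarse X) (φ : CtrlRep X H) : Prop :=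
  ∀ B ∈ S.bounded, FiniteDimensional ℂ ↥(LinearMap.range (φ (chi B) : H →ₗ[ℂ] H))

/-- A controlled Hilbert space is ample if there is an entourage `U` such that `H(U[x])` is
infinite-dimensional for every point `x`. -/
def IsAmple (S : BornCoarse X) (φ : CtrlRep X H) : Prop :=
  ∃ U ∈ S.entourages, ∀ x : X,
    ¬FiniteDimensional ℂ ↥(LinearMap.range (φ (chi (thick U {x})) : H →ₗ[ℂ] H))

/-- A closed subspace `K ⊆ H` is a locally finite subspace if it carries an `X`-control
making it a locally finite `X`-controlled Hilbert space such that the inclusion `K → H`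
has controlled propagation. -/
def IsLocFinSubspace (S : BornCoarse X) (φ : CtrlRep X H) (K : Submodule ℂ H) : Prop :=
  ∃ hK : IsClosed (K : Set H),
    haveI : CompleteSpace K := hK.completeSpace_coe
    ∃ ψ : CtrlRep X ↥K, IsControlledHilbert S ψ ∧ IsLocallyFiniteRep S ψ ∧
      HasCtrlProp S ψ φ K.subtypeL

end

end

section Aux

variable {X : Type*} [TopologicalSpace X] [DiscreteTopology X]

lemma chi_apply' (B : Set X) (x : X) :
    chi B x = B.indicator (fun _ => (1:ℂ)) x := rfl

lemma chi_mul_chi (B B' : Set X) : chi B * chi B' = chi (B ∩ B') := by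
  ext x
  simp only [BoundedContinuousFunction.coe_mul, Pi.mul_apply, chi_apply']
  by_cases hB : x ∈ B <;> by_cases hB' : x ∈ B' <;>
    simp [Set.indicator_apply, hB, hB', Set.mem_inter_iff]

lemma chi_compl (B : Set X) : chi Bᶜ = 1 - chi B := by
  ext x
  simp only [BoundedContinuousFunction.coe_sub, Pi.sub_apply,
    BoundedContinuousFunction.coe_one, Pi.one_apply, chi_apply']
  by_cases h : x ∈ B <;> simp [Set.indicator_apply, h]

lemma sep_of_thick_subset (U : Set (X × X)) (n : ℕ) (B C : Set X)
    (h : thick (relComp {p : X × X | (p.2, p.1) ∈ iterComp U n} (iterComp U n)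
        ∪ {p : X × X | p.1 = p.2}) B ⊆ C) :
    thick (iterComp U n) B ∩ thick (iterComp U n) Cᶜ = ∅ := by
  ext x
  simp only [Set.mem_inter_iff, Set.mem_empty_iff_false, iff_false, not_and]
  rintro ⟨b, hb, hxb⟩ ⟨c, hc, hxc⟩
  exact hc (h ⟨b, hb, Or.inl ⟨x, hxc, hxb⟩⟩)

lemma conj_idem {R : Type*} [Ring R] {p : R} (hp : p * p = p) (a : R) :
    p * (p * a * p) * p = p * a * p := by
  rw [show p * (p * a * p) * p = (p * p) * a * (p * p) by noncomm_ring, hp]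

end Aux

/-- Ideal property of operators supported near a big family in the quasi-local Roe algebra:
if `Q` is quasi-local and `A` lies in the norm closure `D` of the operators supported on
some member of the big family `(Y i)`, then `Q * A` and `A * Q` again lie in `D`. -/
theorem quasiLocal_mul_mem_closure_nearFamily {X : Type*} [TopologicalSpace X]
    [DiscreteTopology X] (S : BornCoarse X)
    {H : Type*} [NormedAddCommGroup H] [InnerProductSpace ℂ H] [CompleteSpace H]
    (φ : CtrlRep X H) (hφ : IsControlledHilbert S φ)
    {I : Type*} [PartialOrder I] [Nonempty I] [IsDirected I (· ≤ ·)]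
    (Y : I → Set X) (hmono : Monotone Y)
    (hbig : ∀ i : I, ∀ U ∈ S.entourages, ∃ j : I, thick U (Y i) ⊆ Y j)
    (Q A : H →L[ℂ] H) (hQ : IsQuasiLocal S φ φ Q)
    (hA : A ∈ closure (⋃ i : I,
      {T : H →L[ℂ] H | φ (chi (Y i)) * T * φ (chi (Y i)) = T})) :
    Q * A ∈ closure (⋃ i : I,
        {T : H →L[ℂ] H | φ (chi (Y i)) * T * φ (chi (Y i)) = T}) ∧
      A * Q ∈ closure (⋃ i : I,
        {T : H →L[ℂ] H | φ (chi (Y i)) * T * φ (chi (Y i)) = T}) := by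
  obtain ⟨U, hU, hQL⟩ := hQ
  have hUn : ∀ n, iterComp U n ∈ S.entourages := by
    intro n
    induction n with
    | zero => exact hU
    | succ n ih => exact S.comp_mem ih hU
  have key : ∀ δ : ℝ, 0 < δ → ∃ j : I, ∃ T' T'' : H →L[ℂ] H,
      φ (chi (Y j)) * T' * φ (chi (Y j)) = T' ∧
      φ (chi (Y j)) * T'' * φ (chi (Y j)) = T'' ∧
      dist (Q * A) T' < δ ∧ dist (A * Q) T'' < δ := by
    intro δ hδ
    have hQ1 : (0:ℝ) < ‖Q‖ + 1 := by positivity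
    obtain ⟨T, hT, hdistAT⟩ :=
      Metric.mem_closure_iff.mp hA (δ / (2 * (‖Q‖ + 1))) (by positivity)
    obtain ⟨i, hTi⟩ := Set.mem_iUnion.mp hT
    have hT1 : (0:ℝ) < ‖T‖ + 1 := by positivity
    set ε := δ / (2 * (‖T‖ + 1)) with hεdef
    have hε : 0 < ε := by positivity
    obtain ⟨n, hn⟩ := hQL ε hε
    set W := relComp {p : X × X | (p.2, p.1) ∈ iterComp U n} (iterComp U n)
        ∪ {p : X × X | p.1 = p.2} with hWdef
    have hWent : W ∈ S.entourages :=
      S.union_mem (S.comp_mem (S.inv_mem (hUn n)) (hUn n)) S.diag_mem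
    obtain ⟨j, hj⟩ := hbig i W hWent
    have hYij : Y i ⊆ Y j := fun x hx => hj ⟨x, hx, Or.inr rfl⟩
    have hsep : thick (iterComp U n) (Y i) ∩ thick (iterComp U n) (Y j)ᶜ = ∅ :=
      sep_of_thick_subset U n (Y i) (Y j) hj
    have hPii : φ (chi (Y i)) * φ (chi (Y i)) = φ (chi (Y i)) := by
      rw [← map_mul, chi_mul_chi, Set.inter_self]
    have hPjj : φ (chi (Y j)) * φ (chi (Y j)) = φ (chi (Y j)) := by
      rw [← map_mul, chi_mul_chi, Set.inter_self]
    have hPij : φ (chi (Y i)) * φ (chi (Y j)) = φ (chi (Y i)) := by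
      rw [← map_mul, chi_mul_chi, Set.inter_eq_self_of_subset_left hYij]
    have hPji : φ (chi (Y j)) * φ (chi (Y i)) = φ (chi (Y i)) := by
      rw [← map_mul, chi_mul_chi, Set.inter_eq_self_of_subset_right hYij]
    have hTi' : φ (chi (Y i)) * T * φ (chi (Y i)) = T := hTi
    have hTl : φ (chi (Y i)) * T = T := by
      nth_rewrite 1 [← hTi']
      rw [← mul_assoc, ← mul_assoc, hPii, hTi']
    have hTr : T * φ (chi (Y i)) = T := by
      nth_rewrite 1 [← hTi']
      rw [mul_assoc, hPii, hTi']
    have hTPj : T * φ (chi (Y j)) = T := by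
      nth_rewrite 1 [← hTr]
      rw [mul_assoc, hPij, hTr]
    have hPjT : φ (chi (Y j)) * T = T := by
      nth_rewrite 1 [← hTl]
      rw [← mul_assoc, hPji, hTl]
    have hq1 : ‖(1 - φ (chi (Y j))) * Q * φ (chi (Y i))‖ ≤ ε := by
      have h := hn (Y i) ((Y j)ᶜ) hsep
      rwa [show φ (chi ((Y j)ᶜ)) ∘L Q ∘L φ (chi (Y i))
          = (1 - φ (chi (Y j))) * Q * φ (chi (Y i)) by
        rw [chi_compl, map_sub, map_one]; rfl] at h
    have hq2 : ‖φ (chi (Y i)) * Q * (1 - φ (chi (Y j)))‖ ≤ ε := by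
      have h := hn ((Y j)ᶜ) (Y i) (by rw [Set.inter_comm]; exact hsep)
      rwa [show φ (chi (Y i)) ∘L Q ∘L φ (chi ((Y j)ᶜ))
          = φ (chi (Y i)) * Q * (1 - φ (chi (Y j))) by
        rw [chi_compl, map_sub, map_one]; rfl] at h
    refine ⟨j, φ (chi (Y j)) * (Q * T) * φ (chi (Y j)),
      φ (chi (Y j)) * (T * Q) * φ (chi (Y j)), conj_idem hPjj _, conj_idem hPjj _, ?_, ?_⟩
    · have hQT : Q * T - φ (chi (Y j)) * (Q * T) * φ (chi (Y j))
          = ((1 - φ (chi (Y j))) * Q * φ (chi (Y i))) * T := by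
        calc Q * T - φ (chi (Y j)) * (Q * T) * φ (chi (Y j))
            = Q * T - φ (chi (Y j)) * (Q * (T * φ (chi (Y j)))) := by noncomm_ring
          _ = Q * T - φ (chi (Y j)) * (Q * T) := by rw [hTPj]
          _ = (1 - φ (chi (Y j))) * (Q * (φ (chi (Y i)) * T)) := by rw [hTl]; noncomm_ring
          _ = ((1 - φ (chi (Y j))) * Q * φ (chi (Y i))) * T := by noncomm_ring
      rw [dist_eq_norm,
        show Q * A - φ (chi (Y j)) * (Q * T) * φ (chi (Y j))
          = Q * (A - T) + (Q * T - φ (chi (Y j)) * (Q * T) * φ (chi (Y j))) by noncomm_ring]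
      calc ‖Q * (A - T) + (Q * T - φ (chi (Y j)) * (Q * T) * φ (chi (Y j)))‖
          ≤ ‖Q * (A - T)‖ + ‖Q * T - φ (chi (Y j)) * (Q * T) * φ (chi (Y j))‖ :=
            norm_add_le _ _
        _ ≤ ‖Q‖ * ‖A - T‖ + ‖(1 - φ (chi (Y j))) * Q * φ (chi (Y i))‖ * ‖T‖ := by
            rw [hQT]; exact add_le_add (norm_mul_le _ _) (norm_mul_le _ _)
        _ ≤ ‖Q‖ * ‖A - T‖ + ε * ‖T‖ := by
            gcongr
        _ < δ := by
            have hd : ‖A - T‖ < δ / (2 * (‖Q‖ + 1)) := by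
              rwa [dist_eq_norm] at hdistAT
            have h1 : ‖Q‖ * ‖A - T‖ < δ / 2 := by
              have : ‖Q‖ * ‖A - T‖ ≤ ‖Q‖ * (δ / (2 * (‖Q‖ + 1))) :=
                mul_le_mul_of_nonneg_left hd.le (norm_nonneg Q)
              have h2 : ‖Q‖ * (δ / (2 * (‖Q‖ + 1))) < (‖Q‖ + 1) * (δ / (2 * (‖Q‖ + 1))) :=
                mul_lt_mul_of_pos_right (lt_add_one _) (by positivity)
              have h3 : (‖Q‖ + 1) * (δ / (2 * (‖Q‖ + 1))) = δ / 2 := by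
                field_simp <;> ring
              linarith
            have h2 : ε * ‖T‖ ≤ δ / 2 := by
              have : ε * ‖T‖ ≤ ε * (‖T‖ + 1) := by gcongr; linarith
              have h3 : ε * (‖T‖ + 1) = δ / 2 := by
                rw [hεdef]; field_simp <;> ring
              linarith
            linarith
    · have hTQ : T * Q - φ (chi (Y j)) * (T * Q) * φ (chi (Y j))
          = T * (φ (chi (Y i)) * Q * (1 - φ (chi (Y j)))) := by
        calc T * Q - φ (chi (Y j)) * (T * Q) * φ (chi (Y j))
            = T * Q - ((φ (chi (Y j)) * T) * Q) * φ (chi (Y j)) := by noncomm_ring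
          _ = T * Q - (T * Q) * φ (chi (Y j)) := by rw [hPjT]
          _ = ((T * φ (chi (Y i))) * Q) * (1 - φ (chi (Y j))) := by rw [hTr]; noncomm_ring
          _ = T * (φ (chi (Y i)) * Q * (1 - φ (chi (Y j)))) := by noncomm_ring
      rw [dist_eq_norm,
        show A * Q - φ (chi (Y j)) * (T * Q) * φ (chi (Y j))
          = (A - T) * Q + (T * Q - φ (chi (Y j)) * (T * Q) * φ (chi (Y j))) by noncomm_ring]
      calc ‖(A - T) * Q + (T * Q - φ (chi (Y j)) * (T * Q) * φ (chi (Y j)))‖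
          ≤ ‖(A - T) * Q‖ + ‖T * Q - φ (chi (Y j)) * (T * Q) * φ (chi (Y j))‖ :=
            norm_add_le _ _
        _ ≤ ‖A - T‖ * ‖Q‖ + ‖T‖ * ‖φ (chi (Y i)) * Q * (1 - φ (chi (Y j)))‖ := by
            rw [hTQ]; exact add_le_add (norm_mul_le _ _) (norm_mul_le _ _)
        _ ≤ ‖A - T‖ * ‖Q‖ + ‖T‖ * ε := by
            gcongr
        _ < δ := by
            have hd : ‖A - T‖ < δ / (2 * (‖Q‖ + 1)) := by
              rwa [dist_eq_norm] at hdistAT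
            have h1 : ‖A - T‖ * ‖Q‖ < δ / 2 := by
              have : ‖A - T‖ * ‖Q‖ ≤ (δ / (2 * (‖Q‖ + 1))) * ‖Q‖ :=
                mul_le_mul_of_nonneg_right hd.le (norm_nonneg Q)
              have h2 : (δ / (2 * (‖Q‖ + 1))) * ‖Q‖ < (δ / (2 * (‖Q‖ + 1))) * (‖Q‖ + 1) :=
                mul_lt_mul_of_pos_left (lt_add_one _) (by positivity)
              have h3 : (δ / (2 * (‖Q‖ + 1))) * (‖Q‖ + 1) = δ / 2 := by
                field_simp <;> ring
              linarith
            have h2 : ‖T‖ * ε ≤ δ / 2 := by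
              have : ‖T‖ * ε ≤ (‖T‖ + 1) * ε := by gcongr; linarith
              have h3 : (‖T‖ + 1) * ε = δ / 2 := by
                rw [hεdef]; field_simp <;> ring
              linarith
            linarith
  constructor
  · rw [Metric.mem_closure_iff]
    intro δ hδ
    obtain ⟨j, T', T'', h1, _, h3, _⟩ := key δ hδ
    exact ⟨T', Set.mem_iUnion.mpr ⟨j, h1⟩, h3⟩
  · rw [Metric.mem_closure_iff]
    intro δ hδ
    obtain ⟨j, T', T'', _, h2, _, h4⟩ := key δ hδ
    exact ⟨T'', Set.mem_iUnion.mpr ⟨j, h2⟩, h4⟩
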